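/- Let Ω be a compact subset of ℝ^n (n ≥ 2) with positive Lebesgue measure. Then the center of mass of Ω, i.e. the point (1/|Ω|) ∫_Ω x dx where |Ω| is the Lebesgue measure of Ω, belongs to the minimal unfolded region Uf(Ω); in particular Uf(Ω) is nonempty. -/

import Mathlib

open scoped RealInnerProductSpace

/-- Reflection in the hyperplane `{x : x·v = b}` (for a unit vector `v`). -/
noncomputable def reflHyp {n : ℕ} (v : EuclideanSpace ℝ (Fin n)) (b : ℝ)
    (x : EuclideanSpace ℝ (Fin n)) : EuclideanSpace ℝ (Fin n) :=
  x - (2 * (⟪x, v⟫ - b)) • v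

/-- The open cap of `X` above the hyperplane `{x : x·v = b}`. -/
def cap {n : ℕ} (X : Set (EuclideanSpace ℝ (Fin n))) (v : EuclideanSpace ℝ (Fin n)) (b : ℝ) :
    Set (EuclideanSpace ℝ (Fin n)) :=
  X ∩ {x | b < ⟪x, v⟫}

/-- The level of the maximal cap of `X` in direction `v`. -/
noncomputable def level {n : ℕ} (X : Set (EuclideanSpace ℝ (Fin n)))
    (v : EuclideanSpace ℝ (Fin n)) : ℝ :=
  sInf {a : ℝ | ∀ b : ℝ, a ≤ b → reflHyp v b '' cap X v b ⊆ X}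

/-- The minimal unfolded region (heart) of `X`. -/
noncomputable def Uf {n : ℕ} (X : Set (EuclideanSpace ℝ (Fin n))) :
    Set (EuclideanSpace ℝ (Fin n)) :=
  ⋂ v ∈ {v : EuclideanSpace ℝ (Fin n) | ‖v‖ = 1}, {x | ⟪x, v⟫ ≤ level X v}

/-- The δ-parallel body of `Ω`: the union of closed δ-balls centered in `Ω`. -/
def parallelBody {n : ℕ} (Ω : Set (EuclideanSpace ℝ (Fin n))) (δ : ℝ) :
    Set (EuclideanSpace ℝ (Fin n)) :=
  ⋃ x ∈ Ω, Metric.closedBall x δ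

section Aux

variable {n : ℕ} {v : EuclideanSpace ℝ (Fin n)}

lemma inner_self_one (hv : ‖v‖ = 1) : ⟪v, v⟫ = 1 := by
  rw [real_inner_self_eq_norm_sq, hv]; norm_num

lemma reflHyp_inner (hv : ‖v‖ = 1) (b : ℝ) (x : EuclideanSpace ℝ (Fin n)) :
    ⟪reflHyp v b x, v⟫ = 2 * b - ⟪x, v⟫ := by
  rw [reflHyp, inner_sub_left, real_inner_smul_left, inner_self_one hv]
  ring

lemma reflHyp_invol (hv : ‖v‖ = 1) (b : ℝ) : Function.Involutive (reflHyp v b) := by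
  intro x
  have h := reflHyp_inner hv b x
  simp only [reflHyp] at h ⊢
  rw [show x - (2 * (⟪x, v⟫ - b)) • v - (2 * (⟪x - (2 * (⟪x, v⟫ - b)) • v, v⟫ - b)) • v
      = x - (2 * (⟪x, v⟫ - b)) • v - (2 * ((2 * b - ⟪x, v⟫) - b)) • v from by rw [h]]
  module

lemma reflHyp_cont (b : ℝ) : Continuous (reflHyp (n := n) v b) := by
  have h1 : Continuous fun x : EuclideanSpace ℝ (Fin n) => ⟪x, v⟫ :=
    Continuous.inner continuous_id continuous_const
  exact continuous_id.sub ((continuous_const.mul (h1.sub continuous_const)).smul continuous_const)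

/-- The linear reflection in the hyperplane through the origin orthogonal to `v`. -/
noncomputable def reflLin (hv : ‖v‖ = 1) :
    EuclideanSpace ℝ (Fin n) ≃ₗᵢ[ℝ] EuclideanSpace ℝ (Fin n) where
  toFun x := x - (2 * ⟪x, v⟫) • v
  invFun x := x - (2 * ⟪x, v⟫) • v
  map_add' x y := by
    show (x + y) - (2 * ⟪x + y, v⟫) • v = (x - (2 * ⟪x, v⟫) • v) + (y - (2 * ⟪y, v⟫) • v)
    rw [inner_add_left]; module
  map_smul' r x := by
    show (r • x) - (2 * ⟪r • x, v⟫) • v = r • (x - (2 * ⟪x, v⟫) • v)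
    rw [real_inner_smul_left]; module
  left_inv x := by
    show (x - (2 * ⟪x, v⟫) • v) - (2 * ⟪x - (2 * ⟪x, v⟫) • v, v⟫) • v = x
    rw [inner_sub_left, real_inner_smul_left, inner_self_one hv]
    module
  right_inv x := by
    show (x - (2 * ⟪x, v⟫) • v) - (2 * ⟪x - (2 * ⟪x, v⟫) • v, v⟫) • v = x
    rw [inner_sub_left, real_inner_smul_left, inner_self_one hv]
    module
  norm_map' x := by
    show ‖x - (2 * ⟪x, v⟫) • v‖ = ‖x‖
    have h : ‖x - (2 * ⟪x, v⟫) • v‖ ^ 2 = ‖x‖ ^ 2 := by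
      rw [norm_sub_sq_real, real_inner_smul_right, norm_smul, hv]
      simp only [Real.norm_eq_abs, one_pow, mul_one, sq_abs]
      ring
    have h2 := congrArg Real.sqrt h
    simpa [Real.sqrt_sq (norm_nonneg _)] using h2

open MeasureTheory in
lemma reflHyp_measurePreserving (hv : ‖v‖ = 1) (b : ℝ) :
    MeasurePreserving (reflHyp v b) volume volume := by
  have heq : reflHyp v b = (fun y => y + (2 * b) • v) ∘ (reflLin hv) := by
    funext x
    show x - (2 * (⟪x, v⟫ - b)) • v = (x - (2 * ⟪x, v⟫) • v) + (2 * b) • v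
    module
  rw [heq]
  exact (measurePreserving_add_right volume _).comp (reflLin hv).measurePreserving

/-- `reflHyp` as a measurable equivalence (it is a continuous involution). -/
noncomputable def reflHypEquiv (hv : ‖v‖ = 1) (b : ℝ) :
    EuclideanSpace ℝ (Fin n) ≃ᵐ EuclideanSpace ℝ (Fin n) where
  toFun := reflHyp v b
  invFun := reflHyp v b
  left_inv := reflHyp_invol hv b
  right_inv := reflHyp_invol hv b
  measurable_toFun := (reflHyp_cont b).measurable
  measurable_invFun := (reflHyp_cont b).measurable

lemma reflHyp_embedding (hv : ‖v‖ = 1) (b : ℝ) :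
    MeasurableEmbedding (reflHyp v b) := (reflHypEquiv hv b).measurableEmbedding

open MeasureTheory in
lemma key_integral (hv : ‖v‖ = 1) (Ω : Set (EuclideanSpace ℝ (Fin n))) (hΩ : IsCompact Ω)
    (a : ℝ) (ha : reflHyp v a '' cap Ω v a ⊆ Ω) :
    ∫ x in Ω, ⟪x, v⟫ ≤ a * (volume Ω).toReal := by
  have mΩ : MeasurableSet Ω := hΩ.measurableSet
  set g : EuclideanSpace ℝ (Fin n) → ℝ := fun x => ⟪x, v⟫ - a with hgdef
  have hgc : Continuous g :=
    (Continuous.inner continuous_id continuous_const).sub continuous_const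
  have hgi : IntegrableOn g Ω := hgc.continuousOn.integrableOn_compact hΩ
  set C : Set (EuclideanSpace ℝ (Fin n)) := cap Ω v a with hCdef
  set L : Set (EuclideanSpace ℝ (Fin n)) := Ω ∩ {x | ⟪x, v⟫ ≤ a} with hLdef
  have hmInner : Measurable fun x : EuclideanSpace ℝ (Fin n) => ⟪x, v⟫ :=
    (Continuous.inner continuous_id continuous_const).measurable
  have hmL : MeasurableSet L := mΩ.inter (measurableSet_le hmInner measurable_const)
  have hCΩ : C ⊆ Ω := Set.inter_subset_left
  have hLΩ : L ⊆ Ω := Set.inter_subset_left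
  have hunion : Ω = C ∪ L := by
    ext x
    simp only [hCdef, hLdef, cap, Set.mem_union, Set.mem_inter_iff, Set.mem_setOf_eq]
    constructor
    · intro hx
      rcases lt_or_ge a ⟪x, v⟫ with h | h
      · exact Or.inl ⟨hx, h⟩
      · exact Or.inr ⟨hx, h⟩
    · rintro (⟨h, _⟩ | ⟨h, _⟩) <;> exact h
  have hdisj : Disjoint C L := by
    rw [Set.disjoint_left]
    rintro x ⟨_, hx1⟩ ⟨_, hx2⟩
    simp only [Set.mem_setOf_eq] at hx1 hx2
    exact absurd hx2 (not_le.2 hx1)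
  have himg : reflHyp v a '' C ⊆ L := by
    rintro _ ⟨x, hx, rfl⟩
    refine ⟨ha ⟨x, hx, rfl⟩, ?_⟩
    rw [Set.mem_setOf_eq, reflHyp_inner hv]
    have := hx.2
    simp only [Set.mem_setOf_eq] at this
    linarith
  have hnegg : (fun x => -g (reflHyp v a x)) = g := by
    funext x
    simp only [hgdef, reflHyp_inner hv]
    ring
  have hC : ∫ x in C, g x = ∫ y in reflHyp v a '' C, (fun y => -g y) y := by
    rw [(reflHyp_measurePreserving hv a).setIntegral_image_emb (reflHyp_embedding hv a)
      (fun y => -g y) C]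
    rw [show (fun x => (fun y => -g y) (reflHyp v a x)) = g from hnegg]
  have hmono : ∫ y in reflHyp v a '' C, (fun y => -g y) y ≤ ∫ y in L, -g y := by
    refine setIntegral_mono_set ((hgi.mono_set hLΩ).neg) ?_ (HasSubset.Subset.eventuallyLE himg)
    refine (ae_restrict_iff' hmL).2 (ae_of_all _ fun x hx => ?_)
    simp only [hgdef, Pi.zero_apply, neg_nonneg]
    have := hx.2
    simp only [Set.mem_setOf_eq] at this
    linarith
  have hLneg : ∫ y in L, -g y = -∫ y in L, g y := by
    exact integral_neg g
  have hsum : ∫ x in Ω, g x = (∫ x in C, g x) + ∫ x in L, g x := by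
    rw [hunion]
    exact setIntegral_union hdisj hmL (hgi.mono_set hCΩ) (hgi.mono_set hLΩ)
  have hle : ∫ x in Ω, g x ≤ 0 := by
    rw [hsum]
    have := hC.trans_le (hmono.trans_eq hLneg)
    linarith
  have hiInner : IntegrableOn (fun x : EuclideanSpace ℝ (Fin n) => ⟪x, v⟫) Ω :=
    (Continuous.inner continuous_id continuous_const).continuousOn.integrableOn_compact hΩ
  have hμfin : volume Ω ≠ ⊤ := hΩ.measure_lt_top.ne
  have : ∫ x in Ω, g x = (∫ x in Ω, ⟪x, v⟫) - a * (volume Ω).toReal := by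
    rw [hgdef]
    rw [integral_sub hiInner (integrableOn_const hΩ.measure_lt_top.ne)]
    rw [setIntegral_const]
    rw [smul_eq_mul, mul_comm]
    rfl
  linarith [hle, this.symm.trans_le hle]

end Aux

open MeasureTheory in
theorem stmt12 {n : ℕ} (hn : 2 ≤ n) (Ω : Set (EuclideanSpace ℝ (Fin n)))
    (hΩ : IsCompact Ω) (hpos : 0 < volume Ω) :
    (volume Ω).toReal⁻¹ • (∫ x in Ω, x) ∈ Uf Ω ∧ (Uf Ω).Nonempty := by
  have hμfin : volume Ω ≠ ⊤ := hΩ.measure_lt_top.ne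
  have hμpos : 0 < (volume Ω).toReal := ENNReal.toReal_pos hpos.ne' hμfin
  have hmem : (volume Ω).toReal⁻¹ • (∫ x in Ω, x) ∈ Uf Ω := by
    refine Set.mem_iInter₂.2 fun v hv => ?_
    have hv : ‖v‖ = 1 := hv
    simp only [Set.mem_setOf_eq]
    have hIint : Integrable (fun x : EuclideanSpace ℝ (Fin n) => x) (volume.restrict Ω) :=
      continuousOn_id.integrableOn_compact hΩ
    have hinner : ⟪(volume Ω).toReal⁻¹ • (∫ x in Ω, x), v⟫
        = (volume Ω).toReal⁻¹ * ∫ x in Ω, ⟪x, v⟫ := by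
      rw [real_inner_smul_left]
      congr 1
      rw [real_inner_comm, ← integral_inner hIint]
      exact integral_congr_ae (ae_of_all _ fun x => real_inner_comm x v)
    rw [hinner, level]
    obtain ⟨M, hM⟩ := (Metric.isBounded_iff_subset_closedBall 0).1 hΩ.isBounded
    have hMmem : M ∈ {a : ℝ | ∀ b : ℝ, a ≤ b → reflHyp v b '' cap Ω v b ⊆ Ω} := by
      intro b hb
      rintro _ ⟨x, ⟨hxΩ, hxb⟩, rfl⟩
      exfalso
      have h1 : ‖x‖ ≤ M := mem_closedBall_zero_iff.1 (hM hxΩ)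
      have h2 : ⟪x, v⟫ ≤ ‖x‖ * ‖v‖ := real_inner_le_norm x v
      rw [hv, mul_one] at h2
      simp only [Set.mem_setOf_eq] at hxb
      linarith
    refine le_csInf ⟨M, hMmem⟩ fun a ha => ?_
    have hkey := key_integral hv Ω hΩ a (ha a le_rfl)
    rw [inv_mul_le_iff₀ hμpos]
    linarith [hkey]
  exact ⟨hmem, ⟨_, hmem⟩⟩
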